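/- Let $d \ge 1$, $\epsilon \in \mathbb{R}$, let $\psi : \mathbb{R}^d \to \mathbb{C}$ be a Schwartz function, let $c : \mathbb{Z}^d \times \mathbb{Z}^d \to \mathbb{C}$ be summable, define $V(x_1,x_2) := \sum_{(n,m)} c(n,m) e^{i(2\pi n\cdot x_1 + 2\pi m \cdot x_2)}$ and $\hat\psi(\xi) := \int_{\mathbb{R}^d} e^{-i\xi\cdot x}\psi(x)\,dx$. Fix $\xi \in \mathbb{R}^d$ and define the unfolding $(\mathcal{T}_\xi \hat\psi)(n,m) := \hat\psi(\xi + 2\pi n + 2\pi(1+\epsilon)m)$ for $(n,m) \in \mathbb{Z}^d \times \mathbb{Z}^d$. Then for every $(n,m) \in \mathbb{Z}^d \times \mathbb{Z}^d$, $\int_{\mathbb{R}^d} e^{-i(\xi + 2\pi n + 2\pi(1+\epsilon)m)\cdot x}\Big(-\tfrac12\Delta\psi(x) + V(x,(1+\epsilon)x)\psi(x)\Big)dx = \tfrac12\big|\xi + 2\pi n + 2\pi(1+\epsilon)m\big|^2 (\mathcal{T}_\xi\hat\psi)(n,m) + \sum_{(n',m') \in \mathbb{Z}^d\times\mathbb{Z}^d}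 c(n-n', m-m')\,(\mathcal{T}_\xi\hat\psi)(n',m')$, the series being absolutely convergent. In other words, $\mathcal{T}_\xi[\mathcal{F}(H_\epsilon\psi)] = \widehat H_\epsilon(\xi)\, \mathcal{T}_\xi\mathcal{F}\psi$, where $[\widehat H_\epsilon(\xi)]_{(n,m),(n',m')} = \tfrac12|\xi + 2\pi n + 2\pi(1+\epsilon)m|^2 \delta_{(n,m),(n',m')} + c(n-n',m-m')$. -/

import Mathlib

open MeasureTheory Real RealInnerProductSpace

noncomputable section

/-- The embedding of a `ℤ^d`-vector into `ℝ^d` (Euclidean space). -/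
def intVec (d : ℕ) (n : Fin d → ℤ) : EuclideanSpace ℝ (Fin d) := WithLp.toLp 2 (fun i => (n i : ℝ))

/-- The Laplacian of `ψ : ℝ^d → ℂ`, as a sum of second derivatives in the
coordinate directions. -/
def laplacian {d : ℕ} (ψ : EuclideanSpace ℝ (Fin d) → ℂ)
    (x : EuclideanSpace ℝ (Fin d)) : ℂ :=
  ∑ i : Fin d,
    fderiv ℝ (fun y => fderiv ℝ ψ y (EuclideanSpace.single i 1)) x
      (EuclideanSpace.single i 1)

section Aux

open FourierTransform SchwartzMap

variable {d : ℕ}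

theorem aux_exp_norm_one (r : ℝ) : ‖Complex.exp (-Complex.I * r)‖ = 1 := by
  rw [Complex.norm_exp]; simp

theorem aux_exp_norm_one' (r : ℝ) : ‖Complex.exp (Complex.I * r)‖ = 1 := by
  rw [Complex.norm_exp]; simp

theorem aux_exp_cont (η : EuclideanSpace ℝ (Fin d)) :
    Continuous (fun x : EuclideanSpace ℝ (Fin d) =>
      Complex.exp (-Complex.I * ((⟪η, x⟫ : ℝ) : ℂ))) := by
  apply Complex.continuous_exp.comp
  exact continuous_const.mul (Complex.continuous_ofReal.comp
    (continuous_const.inner continuous_id))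

theorem aux_int_exp_mul (η : EuclideanSpace ℝ (Fin d)) {g : EuclideanSpace ℝ (Fin d) → ℂ}
    (hg : Integrable g) :
    Integrable (fun x => Complex.exp (-Complex.I * ((⟪η, x⟫ : ℝ) : ℂ)) * g x) :=
  hg.bdd_mul (aux_exp_cont η).aestronglyMeasurable (Filter.Eventually.of_forall fun _ => le_of_eq (aux_exp_norm_one _))

theorem aux_rescale (f : EuclideanSpace ℝ (Fin d) → ℂ) (η : EuclideanSpace ℝ (Fin d)) :
    (∫ x : EuclideanSpace ℝ (Fin d), Complex.exp (-Complex.I * ((⟪η, x⟫ : ℝ) : ℂ)) * f x)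
      = 𝓕 f ((2 * π)⁻¹ • η) := by
  rw [Real.fourier_eq']
  congr 1
  funext x
  rw [smul_eq_mul]
  congr 1
  have h : (-2 * π * ⟪x, (2 * π)⁻¹ • η⟫ : ℝ) = -⟪η, x⟫ := by
    rw [real_inner_smul_right, real_inner_comm]
    have : (2 * π) ≠ 0 := by positivity
    field_simp
  rw [h]
  push_cast
  ring

theorem aux_fourier_pderiv (ψ : SchwartzMap (EuclideanSpace ℝ (Fin d)) ℂ)
    (v w : EuclideanSpace ℝ (Fin d)) :
    𝓕 (fun x => fderiv ℝ ψ x v) w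
      = (2 * π * Complex.I * ((⟪v, w⟫ : ℝ) : ℂ)) * 𝓕 (⇑ψ) w := by
  have hder : (⇑(SchwartzMap.fderivCLM ℝ _ _ ψ) : EuclideanSpace ℝ (Fin d) → _) = fderiv ℝ ⇑ψ := by
    funext x; exact SchwartzMap.fderivCLM_apply ℝ ψ x
  have hint : Integrable (fderiv ℝ ⇑ψ) := hder ▸ (SchwartzMap.fderivCLM ℝ _ _ ψ).integrable
  have key : 𝓕 (fun x => fderiv ℝ ψ x v) w = (𝓕 (fderiv ℝ ⇑ψ) w) v :=
    (Real.fourier_continuousLinearMap_apply hint).symm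
  rw [key, Real.fourier_fderiv ψ.integrable
    ((ψ.smooth ⊤).differentiable (by norm_num)) hint]
  simp [VectorFourier.fourierSMulRight, real_inner_comm w v]
  rw [show ((innerSL ℝ) w) v = ⟪w, v⟫ from rfl]
  ring

/-- second derivative Schwartz map -/
def sd (ψ : SchwartzMap (EuclideanSpace ℝ (Fin d)) ℂ) (i : Fin d) :
    SchwartzMap (EuclideanSpace ℝ (Fin d)) ℂ :=
  LineDeriv.lineDerivOpCLM ℝ (SchwartzMap (EuclideanSpace ℝ (Fin d)) ℂ) (V := EuclideanSpace ℝ (Fin d)) (EuclideanSpace.single i 1)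
    (LineDeriv.lineDerivOpCLM ℝ (SchwartzMap (EuclideanSpace ℝ (Fin d)) ℂ) (V := EuclideanSpace ℝ (Fin d)) (EuclideanSpace.single i 1) ψ)

theorem sd_apply (ψ : SchwartzMap (EuclideanSpace ℝ (Fin d)) ℂ) (i : Fin d)
    (x : EuclideanSpace ℝ (Fin d)) :
    sd ψ i x = fderiv ℝ (fun y => fderiv ℝ ψ y (EuclideanSpace.single i 1)) x
      (EuclideanSpace.single i 1) := by
  have : (⇑(LineDeriv.lineDerivOpCLM ℝ (SchwartzMap (EuclideanSpace ℝ (Fin d)) ℂ) (V := EuclideanSpace ℝ (Fin d)) (EuclideanSpace.single i 1) ψ))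
      = fun y => fderiv ℝ ψ y (EuclideanSpace.single i 1) := by
    funext y; simp [LineDeriv.lineDerivOpCLM_apply, SchwartzMap.lineDerivOp_apply_eq_fderiv]
  rw [sd, LineDeriv.lineDerivOpCLM_apply, SchwartzMap.lineDerivOp_apply_eq_fderiv, this]

theorem aux_fourier_sd (ψ : SchwartzMap (EuclideanSpace ℝ (Fin d)) ℂ) (i : Fin d)
    (w : EuclideanSpace ℝ (Fin d)) :
    𝓕 (⇑(sd ψ i)) w
      = (2 * π * Complex.I * ((w i : ℝ) : ℂ))^2 * 𝓕 (⇑ψ) w := by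
  have h1 : (⇑(sd ψ i)) = fun x => fderiv ℝ (LineDeriv.lineDerivOpCLM ℝ (SchwartzMap (EuclideanSpace ℝ (Fin d)) ℂ) (V := EuclideanSpace ℝ (Fin d))
      (EuclideanSpace.single i 1) ψ) x (EuclideanSpace.single i 1) := by
    funext x; simp [sd, LineDeriv.lineDerivOpCLM_apply, SchwartzMap.lineDerivOp_apply_eq_fderiv]
  have h2 : (⇑(LineDeriv.lineDerivOpCLM ℝ (SchwartzMap (EuclideanSpace ℝ (Fin d)) ℂ) (V := EuclideanSpace ℝ (Fin d)) (EuclideanSpace.single i 1) ψ))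
      = fun x => fderiv ℝ ψ x (EuclideanSpace.single i 1) := by
    funext x; simp [LineDeriv.lineDerivOpCLM_apply, SchwartzMap.lineDerivOp_apply_eq_fderiv]
  have hi : ⟪EuclideanSpace.single i (1:ℝ), w⟫ = w i := by
    rw [EuclideanSpace.inner_single_left]; simp
  rw [h1, aux_fourier_pderiv, h2, aux_fourier_pderiv, hi]
  ring

theorem aux_laplacian_eq (ψ : SchwartzMap (EuclideanSpace ℝ (Fin d)) ℂ) :
    laplacian ⇑ψ = fun x => ∑ i : Fin d, sd ψ i x := by
  funext x; rw [laplacian]; exact Finset.sum_congr rfl fun i _ => (sd_apply ψ i x).symm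

theorem aux_laplacian_integrable (ψ : SchwartzMap (EuclideanSpace ℝ (Fin d)) ℂ) :
    Integrable (laplacian ⇑ψ) := by
  rw [aux_laplacian_eq]
  exact integrable_finset_sum _ fun i _ => (sd ψ i).integrable

theorem aux_fourier_laplacian (ψ : SchwartzMap (EuclideanSpace ℝ (Fin d)) ℂ)
    (w : EuclideanSpace ℝ (Fin d)) :
    𝓕 (laplacian ⇑ψ) w
      = ((-(4 * π^2) * ‖w‖^2 : ℝ) : ℂ) * 𝓕 (⇑ψ) w := by
  rw [aux_laplacian_eq]
  have hsum : 𝓕 (fun x => ∑ i : Fin d, sd ψ i x) w = ∑ i : Fin d, 𝓕 (⇑(sd ψ i)) w := by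
    simp_rw [Real.fourier_eq, Finset.smul_sum]
    rw [integral_finset_sum]
    intro i _
    exact (Real.fourierIntegral_convergent_iff w).2 (sd ψ i).integrable
  rw [hsum]
  simp_rw [aux_fourier_sd]
  rw [← Finset.sum_mul]
  congr 1
  have hnorm : ‖w‖^2 = ∑ i : Fin d, (w i)^2 := by
    rw [EuclideanSpace.norm_eq, Real.sq_sqrt (by positivity)]
    simp [Real.norm_eq_abs, sq_abs]
  rw [hnorm]
  push_cast
  rw [Finset.mul_sum]
  refine Finset.sum_congr rfl fun i _ => ?_
  ring_nf
  rw [Complex.I_sq]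
  ring

theorem intVec_sub (d : ℕ) (n m : Fin d → ℤ) :
    intVec d (n - m) = intVec d n - intVec d m := by
  ext i
  show ((n i - m i : ℤ) : ℝ) = (n i : ℝ) - (m i : ℝ)
  push_cast; ring

end Aux

open FourierTransform

/-- The unfolding map intertwines the Fourier transform of the incommensurate
Hamiltonian `H_ε = -½Δ + V(x,(1+ε)x)` with the lattice operator `Ĥ_ε(ξ)`:
for every `(n,m)`,
`ℱ(H_ε ψ)(ξ + 2πn + 2π(1+ε)m) = ½|ξ + 2πn + 2π(1+ε)m|² (𝒯_ξ ψ̂)(n,m)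
 + ∑_{(n',m')} c(n-n',m-m') (𝒯_ξ ψ̂)(n',m')`, the series being absolutely
convergent. -/
theorem stmt_3 (d : ℕ) (hd : 1 ≤ d) (ε : ℝ)
    (ψ : SchwartzMap (EuclideanSpace ℝ (Fin d)) ℂ)
    (c : (Fin d → ℤ) × (Fin d → ℤ) → ℂ) (hc : Summable c)
    (V : EuclideanSpace ℝ (Fin d) → EuclideanSpace ℝ (Fin d) → ℂ)
    (hV : ∀ x₁ x₂ : EuclideanSpace ℝ (Fin d),
      V x₁ x₂ = ∑' nm : (Fin d → ℤ) × (Fin d → ℤ),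
        c nm * Complex.exp (Complex.I *
          ((2 * π * ⟪intVec d nm.1, x₁⟫ + 2 * π * ⟪intVec d nm.2, x₂⟫ : ℝ) : ℂ)))
    (Fψ : EuclideanSpace ℝ (Fin d) → ℂ)
    (hFψ : ∀ ξ : EuclideanSpace ℝ (Fin d),
      Fψ ξ = ∫ x : EuclideanSpace ℝ (Fin d),
        Complex.exp (-Complex.I * ((⟪ξ, x⟫ : ℝ) : ℂ)) * ψ x)
    (ξ : EuclideanSpace ℝ (Fin d))
    (T : (Fin d → ℤ) × (Fin d → ℤ) → ℂ)
    (hT : ∀ nm : (Fin d → ℤ) × (Fin d → ℤ),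
      T nm = Fψ (ξ + (2 * π) • intVec d nm.1 + (2 * π * (1 + ε)) • intVec d nm.2))
    (n m : Fin d → ℤ) :
    Summable (fun nm' : (Fin d → ℤ) × (Fin d → ℤ) =>
      c (n - nm'.1, m - nm'.2) * T nm') ∧
    (∫ x : EuclideanSpace ℝ (Fin d),
        Complex.exp (-Complex.I *
            ((⟪ξ + (2 * π) • intVec d n + (2 * π * (1 + ε)) • intVec d m, x⟫ : ℝ) : ℂ)) *
          (-(1 / 2 : ℂ) * laplacian (⇑ψ) x + V x ((1 + ε) • x) * ψ x))
      = (1 / 2 : ℂ) *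
          ((‖ξ + (2 * π) • intVec d n + (2 * π * (1 + ε)) • intVec d m‖ ^ 2 : ℝ) : ℂ) *
          T (n, m) +
        ∑' nm' : (Fin d → ℤ) × (Fin d → ℤ), c (n - nm'.1, m - nm'.2) * T nm' := by
  classical
  set η := ξ + (2 * π) • intVec d n + (2 * π * (1 + ε)) • intVec d m with hη
  set K : ℝ := ∫ x : EuclideanSpace ℝ (Fin d), ‖ψ x‖ with hK
  have hcn : Summable (fun nm => ‖c nm‖) := summable_norm_iff.mpr hc
  have hTbound : ∀ nm, ‖T nm‖ ≤ K := by
    intro nm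
    rw [hT, hFψ]
    refine le_trans (norm_integral_le_integral_norm _) (le_of_eq ?_)
    congr 1; funext x
    rw [norm_mul, aux_exp_norm_one, one_mul]
  have einv : Function.Involutive
      (fun nm : (Fin d → ℤ) × (Fin d → ℤ) => (n - nm.1, m - nm.2)) := by
    intro nm; simp
  set e := einv.toPerm _ with he
  -- summability (first conjunct)
  have hsummable : Summable (fun nm' : (Fin d → ℤ) × (Fin d → ℤ) =>
      c (n - nm'.1, m - nm'.2) * T nm') := by
    have h1 : Summable (fun nm' : (Fin d → ℤ) × (Fin d → ℤ) =>
        ‖c (n - nm'.1, m - nm'.2)‖) :=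
      (Equiv.summable_iff e (f := fun nm => ‖c nm‖)).mpr hcn
    refine Summable.of_norm_bounded (h1.mul_right K) fun nm' => ?_
    rw [norm_mul]
    exact mul_le_mul_of_nonneg_left (hTbound nm') (norm_nonneg _)
  refine ⟨hsummable, ?_⟩
  -- the diagonal potential
  set Vd : EuclideanSpace ℝ (Fin d) → ℂ := fun x => V x ((1 + ε) • x) with hVd
  have hVd_eq : Vd = fun x => ∑' nm : (Fin d → ℤ) × (Fin d → ℤ),
      c nm * Complex.exp (Complex.I *
        ((2 * π * ⟪intVec d nm.1, x⟫ + 2 * π * ⟪intVec d nm.2, (1 + ε) • x⟫ : ℝ) : ℂ)) := by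
    funext x; exact hV x ((1 + ε) • x)
  have hterm_norm : ∀ (nm : (Fin d → ℤ) × (Fin d → ℤ)) (x : EuclideanSpace ℝ (Fin d)),
      ‖c nm * Complex.exp (Complex.I *
        ((2 * π * ⟪intVec d nm.1, x⟫ + 2 * π * ⟪intVec d nm.2, (1 + ε) • x⟫ : ℝ) : ℂ))‖
        = ‖c nm‖ := by
    intro nm x
    rw [norm_mul, aux_exp_norm_one', mul_one]
  have hVd_cont : Continuous Vd := by
    rw [hVd_eq]
    refine continuous_tsum (fun nm => ?_) hcn (fun nm x => le_of_eq (hterm_norm nm x))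
    apply continuous_const.mul
    apply Complex.continuous_exp.comp
    apply continuous_const.mul
    apply Complex.continuous_ofReal.comp
    apply Continuous.add
    · exact continuous_const.mul (continuous_const.inner continuous_id)
    · exact continuous_const.mul
        (continuous_const.inner (continuous_id.const_smul (1 + ε)))
  have hVd_bdd : ∀ x, ‖Vd x‖ ≤ ∑' nm, ‖c nm‖ := by
    intro x
    rw [hVd_eq]
    refine le_trans (norm_tsum_le_tsum_norm ?_) (le_of_eq (tsum_congr fun nm => hterm_norm nm x))
    · refine hcn.congr fun nm => (hterm_norm nm x).symm
  -- integrability of the two pieces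
  have hint1 : Integrable (fun x : EuclideanSpace ℝ (Fin d) =>
      Complex.exp (-Complex.I * ((⟪η, x⟫ : ℝ) : ℂ)) *
        (-(1 / 2 : ℂ) * laplacian (⇑ψ) x)) :=
    aux_int_exp_mul η ((aux_laplacian_integrable ψ).const_mul _)
  have hint2 : Integrable (fun x : EuclideanSpace ℝ (Fin d) =>
      Complex.exp (-Complex.I * ((⟪η, x⟫ : ℝ) : ℂ)) * (Vd x * ψ x)) := by
    have : (fun x : EuclideanSpace ℝ (Fin d) =>
        Complex.exp (-Complex.I * ((⟪η, x⟫ : ℝ) : ℂ)) * (Vd x * ψ x))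
        = fun x => (Complex.exp (-Complex.I * ((⟪η, x⟫ : ℝ) : ℂ)) * Vd x) * ψ x := by
      funext x; ring
    rw [this]
    refine ψ.integrable.bdd_mul (c := ∑' nm, ‖c nm‖) ((aux_exp_cont η).mul hVd_cont).aestronglyMeasurable
      (Filter.Eventually.of_forall fun x => ?_)
    rw [norm_mul, aux_exp_norm_one, one_mul]
    exact hVd_bdd x
  -- split the integral
  rw [show (∫ x : EuclideanSpace ℝ (Fin d),
      Complex.exp (-Complex.I * ((⟪η, x⟫ : ℝ) : ℂ)) *
        (-(1 / 2 : ℂ) * laplacian (⇑ψ) x + V x ((1 + ε) • x) * ψ x))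
      = (∫ x : EuclideanSpace ℝ (Fin d),
          Complex.exp (-Complex.I * ((⟪η, x⟫ : ℝ) : ℂ)) *
            (-(1 / 2 : ℂ) * laplacian (⇑ψ) x))
        + ∫ x : EuclideanSpace ℝ (Fin d),
            Complex.exp (-Complex.I * ((⟪η, x⟫ : ℝ) : ℂ)) * (Vd x * ψ x) by
    rw [← integral_add hint1 hint2]
    congr 1; funext x; simp only [hVd]; ring]
  congr 1
  -- Laplacian part
  · have hstep : (∫ x : EuclideanSpace ℝ (Fin d),
        Complex.exp (-Complex.I * ((⟪η, x⟫ : ℝ) : ℂ)) *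
          (-(1 / 2 : ℂ) * laplacian (⇑ψ) x))
        = -(1 / 2 : ℂ) * ∫ x : EuclideanSpace ℝ (Fin d),
            Complex.exp (-Complex.I * ((⟪η, x⟫ : ℝ) : ℂ)) * laplacian (⇑ψ) x := by
      rw [← integral_const_mul]
      congr 1; funext x; ring
    rw [hstep, aux_rescale, aux_fourier_laplacian]
    have hTval : T (n, m) = 𝓕 (⇑ψ) ((2 * π)⁻¹ • η) := by
      rw [hT, hFψ, ← hη, aux_rescale]
    rw [hTval]
    have hw : (-(4 * π ^ 2) * ‖(2 * π)⁻¹ • η‖ ^ 2 : ℝ) = -‖η‖ ^ 2 := by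
      rw [norm_smul, Real.norm_eq_abs, abs_inv, abs_of_pos (by positivity : (0:ℝ) < 2 * π)]
      have h2π : (2 * π) ≠ 0 := by positivity
      field_simp
      ring
    rw [hw]
    push_cast
    ring
  -- potential part
  · have hptwise : ∀ x : EuclideanSpace ℝ (Fin d),
        Complex.exp (-Complex.I * ((⟪η, x⟫ : ℝ) : ℂ)) * (Vd x * ψ x)
          = ∑' nm : (Fin d → ℤ) × (Fin d → ℤ),
              c nm * (Complex.exp (-Complex.I *
                ((⟪ξ + (2 * π) • intVec d (n - nm.1)
                    + (2 * π * (1 + ε)) • intVec d (m - nm.2), x⟫ : ℝ) : ℂ)) * ψ x) := by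
      intro x
      rw [hVd_eq]
      rw [← tsum_mul_right, ← tsum_mul_left]
      refine tsum_congr fun nm => ?_
      have hre : (⟪ξ + (2 * π) • intVec d (n - nm.1)
            + (2 * π * (1 + ε)) • intVec d (m - nm.2), x⟫ : ℝ)
          = ⟪η, x⟫ - (2 * π * ⟪intVec d nm.1, x⟫ + 2 * π * ⟪intVec d nm.2, (1 + ε) • x⟫) := by
        rw [hη]
        simp only [intVec_sub, inner_add_left, inner_sub_left, real_inner_smul_left,
          real_inner_smul_right]
        ring
      rw [hre]
      rw [show (-Complex.I * ((⟪η, x⟫ - (2 * π * ⟪intVec d nm.1, x⟫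
            + 2 * π * ⟪intVec d nm.2, (1 + ε) • x⟫) : ℝ) : ℂ))
          = -Complex.I * ((⟪η, x⟫ : ℝ) : ℂ) + Complex.I *
            ((2 * π * ⟪intVec d nm.1, x⟫ + 2 * π * ⟪intVec d nm.2, (1 + ε) • x⟫ : ℝ) : ℂ) by
        push_cast; ring]
      rw [Complex.exp_add]
      ring
    rw [show (∫ x : EuclideanSpace ℝ (Fin d),
        Complex.exp (-Complex.I * ((⟪η, x⟫ : ℝ) : ℂ)) * (Vd x * ψ x))
        = ∫ x : EuclideanSpace ℝ (Fin d), ∑' nm : (Fin d → ℤ) × (Fin d → ℤ),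
              c nm * (Complex.exp (-Complex.I *
                ((⟪ξ + (2 * π) • intVec d (n - nm.1)
                    + (2 * π * (1 + ε)) • intVec d (m - nm.2), x⟫ : ℝ) : ℂ)) * ψ x) by
      congr 1; funext x; exact hptwise x]
    rw [← MeasureTheory.integral_tsum_of_summable_integral_norm]
    · rw [← Equiv.tsum_eq e (fun nm' => c (n - nm'.1, m - nm'.2) * T nm')]
      refine tsum_congr fun nm => ?_
      have he1 : e nm = (n - nm.1, m - nm.2) := rfl
      rw [he1]
      simp only [sub_sub_cancel]
      rw [integral_const_mul]
      congr 1
      rw [hT, hFψ]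
    · intro nm
      exact (aux_int_exp_mul _ ψ.integrable).const_mul _
    · have hval : ∀ nm : (Fin d → ℤ) × (Fin d → ℤ),
          (∫ x : EuclideanSpace ℝ (Fin d), ‖c nm * (Complex.exp (-Complex.I *
            ((⟪ξ + (2 * π) • intVec d (n - nm.1)
                + (2 * π * (1 + ε)) • intVec d (m - nm.2), x⟫ : ℝ) : ℂ)) * ψ x)‖)
          = ‖c nm‖ * K := by
        intro nm
        rw [hK, ← integral_const_mul]
        congr 1; funext x
        rw [norm_mul, norm_mul, aux_exp_norm_one, one_mul]
      exact (hcn.mul_right K).congr fun nm => (hval nm).symm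

end
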